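/- Let t > 0 and let ψ : ℂ → ℂ be continuous with lim_{A→∞} sup_{|λ|=A} |ψ(λ)| = 0. Then (1) lim_{R→∞} ∫_{θ=−π/8}^{π/8} (Re^{iθ})³ e^{−(Re^{iθ})⁴ t} ψ(Re^{iθ}) · iRe^{iθ} dθ = 0, and (2) lim_{R→∞} ∫_{θ=π/8}^{3π/8} (Re^{iθ})³ e^{(Re^{iθ})⁴ t} ψ(Re^{iθ}) · iRe^{iθ} dθ = 0. -/

import Mathlib

open MeasureTheory Filter Complex Real Set Topology

noncomputable section

private lemma int_exp (c d a b : ℝ) (hc : c ≠ 0) :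
    ∫ θ in a..b, Real.exp (c * θ + d) =
      (Real.exp (c * b + d) - Real.exp (c * a + d)) / c := by
  have h : ∀ x ∈ uIcc a b,
      HasDerivAt (fun θ => Real.exp (c * θ + d) / c) (Real.exp (c * x + d)) x := by
    intro x _
    have h1 : HasDerivAt (fun θ : ℝ => c * θ + d) c x := by
      simpa using ((hasDerivAt_id x).const_mul c).add_const d
    have h2 := h1.exp.div_const c
    rw [mul_div_cancel_right₀ _ hc] at h2
    exact h2
  rw [intervalIntegral.integral_eq_sub_of_hasDerivAt h
    ((Real.continuous_exp.comp ((continuous_const.mul continuous_id).add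
      continuous_const)).intervalIntegrable a b)]
  ring

private lemma exp_int_bound (c d a b : ℝ) (hc : c ≠ 0) (hab : a ≤ b)
    (ha : c * a + d ≤ 0) (hb : c * b + d ≤ 0) :
    ∫ θ in a..b, Real.exp (c * θ + d) ≤ |c|⁻¹ := by
  rw [int_exp c d a b hc]
  have hEa0 : (0:ℝ) ≤ Real.exp (c * a + d) := (Real.exp_pos _).le
  have hEb0 : (0:ℝ) ≤ Real.exp (c * b + d) := (Real.exp_pos _).le
  have hEa1 : Real.exp (c * a + d) ≤ 1 := Real.exp_le_one_iff.mpr ha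
  have hEb1 : Real.exp (c * b + d) ≤ 1 := Real.exp_le_one_iff.mpr hb
  rcases hc.lt_or_gt with h | h
  · rw [abs_of_neg h, div_le_iff_of_neg h]
    have : (-c)⁻¹ * c = -1 := by field_simp
    rw [this]; linarith
  · rw [abs_of_pos h, div_le_iff₀ h]
    have : c⁻¹ * c = 1 := inv_mul_cancel₀ h.ne'
    rw [this]; linarith

private lemma arc_tendsto (t : ℝ) (ht : 0 < t) (ψ : ℂ → ℂ) (hcont : Continuous ψ)
    (hdecay : ∀ ε : ℝ, 0 < ε → ∃ A₀ : ℝ, ∀ A : ℝ, A₀ ≤ A → ∀ l : ℂ, ‖l‖ = A → ‖ψ l‖ ≤ ε)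
    (a b σ p q r s : ℝ) (hab : a ≤ b) (hp : p ≠ 0) (hr : r ≠ 0)
    (hpa : p * a + q ≤ 0) (hpb : p * b + q ≤ 0)
    (hra : r * a + s ≤ 0) (hrb : r * b + s ≤ 0)
    (hcos : ∀ θ ∈ Icc a b, σ * Real.cos (4 * θ) ≤ max (p * θ + q) (r * θ + s)) :
    Tendsto (fun R : ℝ => ∫ θ in a..b,
        ((R:ℂ) * Complex.exp (Complex.I * (θ:ℂ))) ^ 3
          * Complex.exp ((σ:ℂ) * ((R:ℂ) * Complex.exp (Complex.I * (θ:ℂ))) ^ 4 * (t:ℂ))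
          * ψ ((R:ℂ) * Complex.exp (Complex.I * (θ:ℂ)))
          * (Complex.I * (R:ℂ) * Complex.exp (Complex.I * (θ:ℂ)))) atTop (𝓝 0) := by
  rw [NormedAddCommGroup.tendsto_nhds_zero]
  intro ε hε
  set C : ℝ := (|p|⁻¹ + |r|⁻¹) / t with hC
  have hC0 : 0 ≤ C := by positivity
  set ε₁ : ℝ := ε / (2 * (C + 1)) with hε₁def
  have hε₁ : 0 < ε₁ := by positivity
  obtain ⟨A₀, hA₀⟩ := hdecay ε₁ hε₁
  filter_upwards [eventually_ge_atTop (max A₀ 1)] with R hR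
  have hR1 : (1:ℝ) ≤ R := le_trans (le_max_right _ _) hR
  have hR0 : 0 < R := lt_of_lt_of_le one_pos hR1
  set M : ℝ := R ^ 4 * t with hM
  have hM0 : 0 < M := by positivity
  set f : ℝ → ℂ := fun θ : ℝ =>
    ((R:ℂ) * Complex.exp (Complex.I * (θ:ℂ))) ^ 3
      * Complex.exp ((σ:ℂ) * ((R:ℂ) * Complex.exp (Complex.I * (θ:ℂ))) ^ 4 * (t:ℂ))
      * ψ ((R:ℂ) * Complex.exp (Complex.I * (θ:ℂ)))
      * (Complex.I * (R:ℂ) * Complex.exp (Complex.I * (θ:ℂ))) with hf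
  set g : ℝ → ℝ := fun θ : ℝ =>
    ε₁ * R ^ 4 * (Real.exp (M * p * θ + M * q) + Real.exp (M * r * θ + M * s)) with hg
  -- norm facts
  have hnE : ∀ θ : ℝ, ‖Complex.exp (Complex.I * (θ:ℂ))‖ = 1 := by
    intro θ
    rw [Complex.norm_exp]
    simp
  have hnlam : ∀ θ : ℝ, ‖(R:ℂ) * Complex.exp (Complex.I * (θ:ℂ))‖ = R := by
    intro θ
    rw [norm_mul, hnE, Complex.norm_real, Real.norm_eq_abs, abs_of_pos hR0, mul_one]
  have hψb : ∀ θ : ℝ, ‖ψ ((R:ℂ) * Complex.exp (Complex.I * (θ:ℂ)))‖ ≤ ε₁ := by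
    intro θ
    exact hA₀ R (le_trans (le_max_left _ _) hR) _ (hnlam θ)
  have hre : ∀ θ : ℝ,
      ((σ:ℂ) * ((R:ℂ) * Complex.exp (Complex.I * (θ:ℂ))) ^ 4 * (t:ℂ)).re
        = M * (σ * Real.cos (4 * θ)) := by
    intro θ
    have h4 : Complex.exp (Complex.I * (θ:ℂ)) ^ 4
        = Complex.exp (((4 * θ : ℝ) : ℂ) * Complex.I) := by
      rw [← Complex.exp_nat_mul]
      congr 1
      push_cast
      ring
    have heq : (σ:ℂ) * ((R:ℂ) * Complex.exp (Complex.I * (θ:ℂ))) ^ 4 * (t:ℂ)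
        = ((σ * R ^ 4 * t : ℝ) : ℂ) * Complex.exp (((4 * θ : ℝ) : ℂ) * Complex.I) := by
      rw [mul_pow, h4]
      push_cast
      ring
    rw [heq, Complex.re_ofReal_mul, Complex.exp_ofReal_mul_I_re, hM]
    ring
  have hnorm : ∀ θ : ℝ, ‖f θ‖
      = R ^ 4 * (Real.exp (M * (σ * Real.cos (4 * θ)))
          * ‖ψ ((R:ℂ) * Complex.exp (Complex.I * (θ:ℂ)))‖) := by
    intro θ
    rw [hf]
    simp only [norm_mul, norm_pow, hnlam, hnE,
      Complex.norm_exp, hre θ, Complex.norm_I, Complex.norm_real, Real.norm_eq_abs,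
      abs_of_pos hR0]
    ring
  -- continuity / integrability
  have hlamc : Continuous fun θ : ℝ => (R:ℂ) * Complex.exp (Complex.I * (θ:ℂ)) := by
    continuity
  have hfc : Continuous f := by
    rw [hf]
    exact (((hlamc.pow 3).mul (Complex.continuous_exp.comp
      (((continuous_const.mul (hlamc.pow 4))).mul continuous_const))).mul
      (hcont.comp hlamc)).mul ((continuous_const.mul continuous_const).mul
      (Complex.continuous_exp.comp (continuous_const.mul Complex.continuous_ofReal)))
  have haff : ∀ u v : ℝ, Continuous fun θ : ℝ => u * θ + v := fun u v =>
    (continuous_const.mul continuous_id).add continuous_const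
  have hgi1 : IntervalIntegrable (fun θ : ℝ => Real.exp (M * p * θ + M * q)) volume a b :=
    (Real.continuous_exp.comp (haff (M * p) (M * q))).intervalIntegrable a b
  have hgi2 : IntervalIntegrable (fun θ : ℝ => Real.exp (M * r * θ + M * s)) volume a b :=
    (Real.continuous_exp.comp (haff (M * r) (M * s))).intervalIntegrable a b
  have hgc : Continuous g := by
    rw [hg]
    exact continuous_const.mul ((Real.continuous_exp.comp (haff (M * p) (M * q))).add
      (Real.continuous_exp.comp (haff (M * r) (M * s))))
  -- pointwise bound
  have hle : ∀ θ ∈ Icc a b, ‖f θ‖ ≤ g θ := by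
    intro θ hθ
    rw [hnorm θ, hg]
    have hE0 : (0:ℝ) ≤ Real.exp (M * (σ * Real.cos (4 * θ))) := (Real.exp_pos _).le
    have h1 : Real.exp (M * (σ * Real.cos (4 * θ)))
        ≤ Real.exp (M * p * θ + M * q) + Real.exp (M * r * θ + M * s) := by
      rcases le_max_iff.mp (hcos θ hθ) with h | h
      · have h2 : M * (σ * Real.cos (4 * θ)) ≤ M * p * θ + M * q := by
          have := mul_le_mul_of_nonneg_left h hM0.le
          nlinarith
        exact le_trans (Real.exp_le_exp.mpr h2)
          (le_add_of_nonneg_right (Real.exp_pos _).le)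
      · have h2 : M * (σ * Real.cos (4 * θ)) ≤ M * r * θ + M * s := by
          have := mul_le_mul_of_nonneg_left h hM0.le
          nlinarith
        exact le_trans (Real.exp_le_exp.mpr h2)
          (le_add_of_nonneg_left (Real.exp_pos _).le)
    calc R ^ 4 * (Real.exp (M * (σ * Real.cos (4 * θ)))
            * ‖ψ ((R:ℂ) * Complex.exp (Complex.I * (θ:ℂ)))‖)
        ≤ R ^ 4 * (Real.exp (M * (σ * Real.cos (4 * θ))) * ε₁) := by
          gcongr
          exact hψb θ
      _ = ε₁ * R ^ 4 * Real.exp (M * (σ * Real.cos (4 * θ))) := by ring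
      _ ≤ ε₁ * R ^ 4 * (Real.exp (M * p * θ + M * q) + Real.exp (M * r * θ + M * s)) := by
          gcongr
  -- the integral bounds
  have hb1 : ∫ θ in a..b, Real.exp (M * p * θ + M * q) ≤ |M * p|⁻¹ := by
    refine exp_int_bound (M * p) (M * q) a b (mul_ne_zero hM0.ne' hp) hab ?_ ?_
    · have h : M * p * a + M * q = M * (p * a + q) := by ring
      rw [h]; exact mul_nonpos_iff.mpr (Or.inl ⟨hM0.le, hpa⟩)
    · have h : M * p * b + M * q = M * (p * b + q) := by ring
      rw [h]; exact mul_nonpos_iff.mpr (Or.inl ⟨hM0.le, hpb⟩)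
  have hb2 : ∫ θ in a..b, Real.exp (M * r * θ + M * s) ≤ |M * r|⁻¹ := by
    refine exp_int_bound (M * r) (M * s) a b (mul_ne_zero hM0.ne' hr) hab ?_ ?_
    · have h : M * r * a + M * s = M * (r * a + s) := by ring
      rw [h]; exact mul_nonpos_iff.mpr (Or.inl ⟨hM0.le, hra⟩)
    · have h : M * r * b + M * s = M * (r * b + s) := by ring
      rw [h]; exact mul_nonpos_iff.mpr (Or.inl ⟨hM0.le, hrb⟩)
  have habs1 : |M * p|⁻¹ = M⁻¹ * |p|⁻¹ := by
    rw [abs_mul, abs_of_pos hM0, mul_inv]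
  have habs2 : |M * r|⁻¹ = M⁻¹ * |r|⁻¹ := by
    rw [abs_mul, abs_of_pos hM0, mul_inv]
  -- put it together
  calc ‖∫ θ in a..b, f θ‖
      ≤ ∫ θ in a..b, ‖f θ‖ := intervalIntegral.norm_integral_le_integral_norm hab
    _ ≤ ∫ θ in a..b, g θ := by
        refine intervalIntegral.integral_mono_on hab
          (hfc.norm.intervalIntegrable a b) (hgc.intervalIntegrable a b) hle
    _ = ε₁ * R ^ 4 * ((∫ θ in a..b, Real.exp (M * p * θ + M * q))
          + (∫ θ in a..b, Real.exp (M * r * θ + M * s))) := by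
        rw [hg]
        rw [intervalIntegral.integral_const_mul, intervalIntegral.integral_add hgi1 hgi2]
    _ ≤ ε₁ * R ^ 4 * (|M * p|⁻¹ + |M * r|⁻¹) := by
        have h0 : (0:ℝ) ≤ ε₁ * R ^ 4 := by positivity
        exact mul_le_mul_of_nonneg_left (add_le_add hb1 hb2) h0
    _ = ε₁ * C := by
        rw [habs1, habs2, hC, hM]
        field_simp
    _ < ε := by
        rw [hε₁def, div_mul_eq_mul_div, div_lt_iff₀ (by positivity)]
        nlinarith

/-- Jordan-type lemmas for the dispersion relation `ω(λ) = λ⁴`,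
over arcs of the circle `|λ| = R` parametrized by `λ = R e^{iθ}`, `dλ = iRe^{iθ} dθ`. -/
theorem stmt2 (t : ℝ) (ht : 0 < t) (ψ : ℂ → ℂ) (hcont : Continuous ψ)
    (hdecay : ∀ ε : ℝ, 0 < ε → ∃ A₀ : ℝ, ∀ A : ℝ, A₀ ≤ A → ∀ l : ℂ, ‖l‖ = A → ‖ψ l‖ ≤ ε) :
    Tendsto (fun R : ℝ => ∫ θ in (-(π/8))..(π/8),
        ((R:ℂ) * Complex.exp (Complex.I * (θ:ℂ))) ^ 3
          * Complex.exp (-((R:ℂ) * Complex.exp (Complex.I * (θ:ℂ))) ^ 4 * (t:ℂ))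
          * ψ ((R:ℂ) * Complex.exp (Complex.I * (θ:ℂ)))
          * (Complex.I * (R:ℂ) * Complex.exp (Complex.I * (θ:ℂ)))) atTop (𝓝 0)
    ∧ Tendsto (fun R : ℝ => ∫ θ in (π/8)..(3*π/8),
        ((R:ℂ) * Complex.exp (Complex.I * (θ:ℂ))) ^ 3
          * Complex.exp (((R:ℂ) * Complex.exp (Complex.I * (θ:ℂ))) ^ 4 * (t:ℂ))
          * ψ ((R:ℂ) * Complex.exp (Complex.I * (θ:ℂ)))
          * (Complex.I * (R:ℂ) * Complex.exp (Complex.I * (θ:ℂ)))) atTop (𝓝 0) := by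
  have hπ : (0:ℝ) < π := Real.pi_pos
  constructor
  · -- σ = -1, arc [-π/8, π/8]
    have hcos1 : ∀ θ ∈ Icc (-(π/8)) (π/8),
        (-1 : ℝ) * Real.cos (4 * θ) ≤ max ((8/π) * θ + (-1)) ((-(8/π)) * θ + (-1)) := by
      intro θ hθ
      obtain ⟨h1, h2⟩ := hθ
      rcases le_or_gt 0 θ with hθ0 | hθ0
      · refine le_trans ?_ (le_max_left _ _)
        have hc : Real.cos (4 * θ) = Real.sin (π/2 - 4 * θ) :=
          (Real.sin_pi_div_two_sub _).symm
        have hs : 2/π * (π/2 - 4 * θ) ≤ Real.sin (π/2 - 4 * θ) :=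
          Real.mul_le_sin (by linarith) (by linarith)
        have he : 2/π * (π/2 - 4 * θ) = 1 - (8/π) * θ := by
          field_simp
          ring
        rw [hc]
        linarith [he ▸ hs]
      · refine le_trans ?_ (le_max_right _ _)
        have hc : Real.cos (4 * θ) = Real.sin (π/2 + 4 * θ) := by
          rw [← Real.sin_pi_div_two_sub]
          rw [← Real.sin_pi_sub]
          congr 1
          ring
        have hs : 2/π * (π/2 + 4 * θ) ≤ Real.sin (π/2 + 4 * θ) :=
          Real.mul_le_sin (by linarith) (by linarith)
        have he : 2/π * (π/2 + 4 * θ) = 1 + (8/π) * θ := by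
          field_simp
          ring
        rw [hc]
        linarith [he ▸ hs]
    have key1 : (8/π) * (π/8) = 1 := by field_simp
    have key2 : (8/π) * (-(π/8)) = -1 := by field_simp
    have h := arc_tendsto t ht ψ hcont hdecay (-(π/8)) (π/8) (-1) (8/π) (-1) (-(8/π)) (-1)
      (by linarith) (by positivity) (by simp [ne_eq])
      (by nlinarith) (by nlinarith) (by nlinarith) (by nlinarith) hcos1
    simpa using h
  · -- σ = 1, arc [π/8, 3π/8]
    have hcos2 : ∀ θ ∈ Icc (π/8) (3*π/8),
        (1 : ℝ) * Real.cos (4 * θ) ≤ max ((-(8/π)) * θ + 1) ((8/π) * θ + (-3)) := by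
      intro θ hθ
      obtain ⟨h1, h2⟩ := hθ
      have hc : Real.cos (4 * θ) = -Real.sin (4 * θ - π/2) := by
        rw [Real.sin_sub_pi_div_two]
        ring
      rcases le_or_gt (4 * θ) π with hθ0 | hθ0
      · refine le_trans ?_ (le_max_left _ _)
        have hs : 2/π * (4 * θ - π/2) ≤ Real.sin (4 * θ - π/2) :=
          Real.mul_le_sin (by linarith) (by linarith)
        have he : 2/π * (4 * θ - π/2) = (8/π) * θ - 1 := by
          field_simp
          ring
        rw [hc]
        linarith [he ▸ hs]
      · refine le_trans ?_ (le_max_right _ _)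
        have hc2 : Real.sin (4 * θ - π/2) = Real.sin (3*π/2 - 4 * θ) := by
          rw [← Real.sin_pi_sub]
          congr 1
          ring
        have hs : 2/π * (3*π/2 - 4 * θ) ≤ Real.sin (3*π/2 - 4 * θ) :=
          Real.mul_le_sin (by linarith) (by linarith)
        have he : 2/π * (3*π/2 - 4 * θ) = 3 - (8/π) * θ := by
          field_simp
          ring
        rw [hc, hc2]
        linarith [he ▸ hs]
    have key1 : (8/π) * (π/8) = 1 := by field_simp
    have key3 : (8/π) * (3*π/8) = 3 := by field_simp
    have h := arc_tendsto t ht ψ hcont hdecay (π/8) (3*π/8) 1 (-(8/π)) 1 (8/π) (-3)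
      (by linarith) (by simp [ne_eq]) (by positivity)
      (by nlinarith) (by nlinarith) (by nlinarith) (by nlinarith) hcos2
    simpa using h
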